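/- For every odd prime p, there exist infinitely many squarefree integers M ≥ 2 with the following property: there are integers t ≥ 1 and r ≥ 1 with p⁴t² − 1 = M·r² such that the unit ε = p²·t + r·√M of the ring of integers of ℚ(√M) (a unit of norm 1, which satisfies ε² ≡ −1 (mod p²·O_K) and hence is a local pth power at p) is not a pth power in O_{ℚ(√M)}. In particular there are infinitely many real quadratic fields whose normalized p-adic regulator is divisible by p, hence infinitely many non-p-rational real quadratic fields. -/

import Mathlib

private lemma aux_pos {a b : ℝ} (hb : 0 < b) (h : 0 < a * b) : 0 < a := by
  by_contra hcon
  push_neg at hcon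
  nlinarith


set_option maxHeartbeats 1000000 in
lemma pell_gap {M x1 y1 x2 y2 : ℤ} (hM : 2 ≤ M) (hx1 : 2 ≤ x1)
    (hy1 : 1 ≤ y1) (hy2 : 1 ≤ y2) (h1 : x1 ^ 2 - M * y1 ^ 2 = 1) (h2 : x2 ^ 2 - M * y2 ^ 2 = 1)
    (hlt : x1 < x2) : 2 * x1 < x2 := by
  have hMR : (2:ℝ) ≤ (M:ℝ) := by exact_mod_cast hM
  have hM0 : (0:ℝ) ≤ (M:ℝ) := by linarith
  obtain ⟨s, hs0, hs2⟩ : ∃ s : ℝ, 0 ≤ s ∧ s^2 = (M:ℝ) :=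
    ⟨Real.sqrt (M:ℝ), Real.sqrt_nonneg _, Real.sq_sqrt hM0⟩
  have hs1 : 1 ≤ s := by nlinarith
  have h1R : (x1:ℝ)^2 - (M:ℝ) * (y1:ℝ)^2 = 1 := by exact_mod_cast h1
  have h2R : (x2:ℝ)^2 - (M:ℝ) * (y2:ℝ)^2 = 1 := by exact_mod_cast h2
  have hx1R : (2:ℝ) ≤ (x1:ℝ) := by exact_mod_cast hx1
  have hy1R : (1:ℝ) ≤ (y1:ℝ) := by exact_mod_cast hy1
  have hy2R : (1:ℝ) ≤ (y2:ℝ) := by exact_mod_cast hy2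
  have hltR : (x1:ℝ) < (x2:ℝ) := by exact_mod_cast hlt
  have hy12 : y1 ≤ y2 := by
    by_contra hcon
    push_neg at hcon
    have hsq : y2^2 < y1^2 := pow_lt_pow_left₀ hcon (by linarith) two_ne_zero
    have hx12 : x1^2 < x2^2 := pow_lt_pow_left₀ hlt (by linarith) two_ne_zero
    nlinarith
  have hy12R : (y1:ℝ) ≤ (y2:ℝ) := by exact_mod_cast hy12
  have hz1 : (0:ℝ) < (x1:ℝ) + (y1:ℝ)*s := by nlinarith
  have hz2 : (0:ℝ) < (x2:ℝ) + (y2:ℝ)*s := by nlinarith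
  have hz12 : (x1:ℝ) + (y1:ℝ)*s < (x2:ℝ) + (y2:ℝ)*s := by
    nlinarith [mul_nonneg (sub_nonneg.mpr hy12R) hs0]
  obtain ⟨X, hX⟩ : ∃ X : ℤ, X = x1*x2 - M*y1*y2 := ⟨_, rfl⟩
  obtain ⟨Y, hY⟩ : ∃ Y : ℤ, Y = x1*y2 - x2*y1 := ⟨_, rfl⟩
  have hXR : (X:ℝ) = (x1:ℝ)*(x2:ℝ) - (M:ℝ)*(y1:ℝ)*(y2:ℝ) := by rw [hX]; push_cast; ring
  have hYR : (Y:ℝ) = (x1:ℝ)*(y2:ℝ) - (x2:ℝ)*(y1:ℝ) := by rw [hY]; push_cast; ring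
  have hnorm3 : X^2 - M*Y^2 = 1 := by
    have h' : X^2 - M*Y^2 = (x1^2 - M*y1^2) * (x2^2 - M*y2^2) := by rw [hX, hY]; ring
    rw [h', h1, h2]; ring
  have key1 : ((X:ℝ) + (Y:ℝ)*s) * ((x1:ℝ) + (y1:ℝ)*s) = (x2:ℝ) + (y2:ℝ)*s := by
    rw [hXR, hYR]
    linear_combination (((x1:ℝ)*(y2:ℝ) - (x2:ℝ)*(y1:ℝ))*(y1:ℝ)) * hs2 + ((x2:ℝ) + (y2:ℝ)*s) * h1R
  have key2 : ((x2:ℝ) + (y2:ℝ)*s) * ((X:ℝ) - (Y:ℝ)*s) = (x1:ℝ) + (y1:ℝ)*s := by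
    rw [hXR, hYR]
    linear_combination (-(y2:ℝ)*((x1:ℝ)*(y2:ℝ) - (x2:ℝ)*(y1:ℝ))) * hs2 + ((x1:ℝ) + (y1:ℝ)*s) * h2R
  have hprod : ((X:ℝ) + (Y:ℝ)*s) * ((X:ℝ) - (Y:ℝ)*s) = 1 := by
    have hn : (X:ℝ)^2 - (M:ℝ)*(Y:ℝ)^2 = 1 := by exact_mod_cast hnorm3
    linear_combination (-(Y:ℝ)^2) * hs2 + hn
  have hA1 : 1 < (X:ℝ) + (Y:ℝ)*s := by
    have h5 : 0 < ((X:ℝ) + (Y:ℝ)*s - 1) * ((x1:ℝ) + (y1:ℝ)*s) := by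
      have : ((X:ℝ) + (Y:ℝ)*s - 1) * ((x1:ℝ) + (y1:ℝ)*s)
          = ((x2:ℝ) + (y2:ℝ)*s) - ((x1:ℝ) + (y1:ℝ)*s) := by linear_combination key1
      rw [this]; linarith
    linarith [aux_pos hz1 h5]
  have hAb0 : 0 < (X:ℝ) - (Y:ℝ)*s := by
    have h5 : 0 < ((X:ℝ) - (Y:ℝ)*s) * ((x2:ℝ) + (y2:ℝ)*s) := by
      have : ((X:ℝ) - (Y:ℝ)*s) * ((x2:ℝ) + (y2:ℝ)*s) = (x1:ℝ) + (y1:ℝ)*s := by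
        linear_combination key2
      rw [this]; linarith
    exact aux_pos hz2 h5
  have hAb1 : (X:ℝ) - (Y:ℝ)*s < 1 := by
    have h5 : 0 < (1 - ((X:ℝ) - (Y:ℝ)*s)) * ((x2:ℝ) + (y2:ℝ)*s) := by
      have : (1 - ((X:ℝ) - (Y:ℝ)*s)) * ((x2:ℝ) + (y2:ℝ)*s)
          = ((x2:ℝ) + (y2:ℝ)*s) - ((x1:ℝ) + (y1:ℝ)*s) := by linear_combination -key2
      rw [this]; linarith
    linarith [aux_pos hz2 h5]
  have hX2 : (2:ℝ) ≤ (X:ℝ) := by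
    have h2X : (1:ℝ) < (X:ℝ) := by
      nlinarith [mul_pos (sub_pos.mpr hA1) (sub_pos.mpr hAb1)]
    have : (1:ℤ) < X := by exact_mod_cast h2X
    exact_mod_cast this
  have hY1 : (1:ℝ) ≤ (Y:ℝ) := by
    have hYs : 0 < (Y:ℝ)*s := by linarith
    have hYpos : 0 < (Y:ℝ) := aux_pos (by linarith : (0:ℝ) < s) hYs
    have : (0:ℤ) < Y := by exact_mod_cast hYpos
    exact_mod_cast this
  have hAge : 2 + s ≤ (X:ℝ) + (Y:ℝ)*s := by
    have hr : (X:ℝ) + (Y:ℝ)*s - (2+s) = ((X:ℝ)-2) + ((Y:ℝ)-1)*s := by ring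
    have h7 : 0 ≤ ((Y:ℝ)-1)*s := mul_nonneg (by linarith) hs0
    linarith
  have hz2bar : (0:ℝ) < (x2:ℝ) - (y2:ℝ)*s := by
    have hprod2 : ((x2:ℝ) + (y2:ℝ)*s) * ((x2:ℝ) - (y2:ℝ)*s) = 1 := by
      linear_combination (-(y2:ℝ)^2) * hs2 + h2R
    exact aux_pos hz2 (by rw [mul_comm] at hprod2; rw [hprod2]; norm_num)
  have hfin : (2 + s) * ((x1:ℝ) + (y1:ℝ)*s) < 2*(x2:ℝ) := by
    have h6 : (2 + s) * ((x1:ℝ) + (y1:ℝ)*s) ≤ ((X:ℝ) + (Y:ℝ)*s) * ((x1:ℝ) + (y1:ℝ)*s) :=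
      mul_le_mul_of_nonneg_right hAge hz1.le
    rw [key1] at h6
    linarith
  have hwpos : (0:ℝ) < (y1:ℝ)*s := by nlinarith
  have hw : ((y1:ℝ)*s)^2 = (x1:ℝ)^2 - 1 := by
    have : ((y1:ℝ)*s)^2 = (y1:ℝ)^2 * s^2 := by ring
    rw [this, hs2]; linarith
  have hws : (x1:ℝ) ≤ 2*((y1:ℝ)*s) := by
    by_contra hcon
    push_neg at hcon
    have := pow_lt_pow_left₀ hcon (by positivity) two_ne_zero
    nlinarith
  have hgoal : (2*x1 : ℝ) < (x2:ℝ) := by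
    nlinarith [mul_nonneg (sub_nonneg.mpr hs1) (by linarith : (0:ℝ) ≤ (x1:ℝ)),
      mul_nonneg (by linarith : (0:ℝ) ≤ (y1:ℝ) - 1) (by nlinarith : (0:ℝ) ≤ s^2 - 2)]
  exact_mod_cast hgoal

lemma count_aux {a : ℕ} (ha : 2 ≤ a) : a * (3*(6*a)+1) < 2^(6*a) := by
  have h1 : a < 2^a := Nat.lt_two_pow_self
  have h2 : a*(3*(6*a)+1) ≤ 19*(a*a) := by nlinarith
  have h3 : a*a < 2^a * 2^a := Nat.mul_lt_mul_of_lt_of_lt h1 h1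
  have h4 : 19*(a*a) < 32*(2^a*2^a) := by
    have := Nat.mul_le_mul_left 19 h3.le
    nlinarith
  have h5 : 32*(2^a*2^a) = 2^(2*a+5) := by rw [pow_add]; ring
  have h6 : 2^(2*a+5) ≤ 2^(6*a) := Nat.pow_le_pow_right (by norm_num) (by omega)
  omega

set_option maxHeartbeats 1600000 in
/-- for every odd prime `p` there are infinitely many squarefree
integers `M ≥ 2` such that for some integers `t, r ≥ 1` with `p⁴t² − 1 = M·r²`,
the norm-one unit `ε = p²t + r√M` of `O_{ℚ(√M)}` satisfies
`ε² ≡ −1 (mod p²·O_K)` (so it is a local `p`th power at `p`) but is not a `p`th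
power in `O_{ℚ(√M)}`; hence there are infinitely many non-`p`-rational real
quadratic fields. -/
theorem infinitely_many_non_p_rational
    (p : ℕ) (hp : p.Prime) (hodd : Odd p) :
    {M : ℤ | 2 ≤ M ∧ Squarefree M ∧
      ∃ t r : ℤ, 1 ≤ t ∧ 1 ≤ r ∧ (p : ℤ) ^ 4 * t ^ 2 - 1 = M * r ^ 2 ∧
        (∃ gu gv : ℤ,
          ((p : ℝ) ^ 2 * (t : ℝ) + (r : ℝ) * Real.sqrt M) ^ 2 + 1 =
            (p : ℝ) ^ 2 * ((gu : ℝ) + (gv : ℝ) * Real.sqrt M)) ∧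
        ¬∃ u v : ℤ, (4 : ℤ) ∣ u ^ 2 - M * v ^ 2 ∧
          (((u : ℝ) + (v : ℝ) * Real.sqrt M) / 2) ^ p =
            (p : ℝ) ^ 2 * (t : ℝ) + (r : ℝ) * Real.sqrt M}.Infinite := by
  apply Set.infinite_of_not_bddAbove
  rintro ⟨B, hB⟩
  have hp3 : 3 ≤ p := by
    have h2 := hp.two_le
    rcases hodd with ⟨m, hm⟩
    omega
  choose Mf rf hMrf hsf using fun t : ℕ => Nat.sq_mul_squarefree (p ^ 4 * t ^ 2 - 1)
  have hbase : ∀ t : ℕ, 1 ≤ t → 81 ≤ p ^ 4 * t ^ 2 := by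
    intro t ht
    have h1 : 81 ≤ p ^ 4 := by
      calc (81:ℕ) = 3^4 := by norm_num
      _ ≤ p^4 := Nat.pow_le_pow_left hp3 4
    have h2 : 1 ≤ t^2 := Nat.one_le_pow _ _ (by omega)
    calc (81:ℕ) = 81 * 1 := by norm_num
    _ ≤ p^4 * t^2 := Nat.mul_le_mul h1 h2
  have hpos : ∀ t : ℕ, 1 ≤ t → 1 ≤ rf t ∧ 1 ≤ Mf t := by
    intro t ht
    have h1 := hMrf t
    have h2 := hbase t ht
    constructor <;> by_contra h <;> push_neg at h
    · have h3 : rf t = 0 := by omega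
      rw [h3] at h1
      simp at h1
      omega
    · have h3 : Mf t = 0 := by omega
      rw [h3] at h1
      simp at h1
      omega
  have hzeq : ∀ t : ℕ, 1 ≤ t → ((p:ℤ)^2*(t:ℤ))^2 - (Mf t : ℤ)*((rf t : ℤ))^2 = 1 := by
    intro t ht
    have h1 : 1 ≤ p^4*t^2 := by have := hbase t ht; omega
    have h3 : ((rf t ^2 * Mf t : ℕ) : ℤ) = ((p^4*t^2 - 1 : ℕ) : ℤ) := by
      exact_mod_cast congrArg (Nat.cast : ℕ → ℤ) (hMrf t)
    rw [Nat.cast_sub h1] at h3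
    push_cast at h3
    push_cast
    linarith [h3]
  have hM2 : ∀ t : ℕ, 1 ≤ t → 2 ≤ Mf t := by
    intro t ht
    by_contra h
    push_neg at h
    have h1 : Mf t = 1 := by have := (hpos t ht).2; omega
    have h2 := hMrf t
    rw [h1, mul_one] at h2
    -- rf t ^ 2 = p^4*t^2 - 1
    have hx : 9 ≤ p^2*t := by
      have : 9 ≤ p^2 := by nlinarith
      calc 9 ≤ p^2 := this
      _ = p^2*1 := by ring
      _ ≤ p^2*t := Nat.mul_le_mul_left _ ht
    have hx2 : (p^2*t)^2 = p^4*t^2 := by ring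
    have h4 : rf t ^ 2 + 1 = (p^2*t)^2 := by
      have := hbase t ht
      omega
    have h5 : rf t < p^2*t := by
      by_contra h6
      push_neg at h6
      have := Nat.pow_le_pow_left h6 2
      omega
    have h7 : (rf t + 1)^2 ≤ (p^2*t)^2 := Nat.pow_le_pow_left (by omega) 2
    have h8 : (rf t + 1)^2 = rf t ^2 + 2*rf t + 1 := by ring
    have h9 := (hpos t ht).1
    omega
  have hgap : ∀ t1 t2 : ℕ, 1 ≤ t1 → t1 < t2 → Mf t1 = Mf t2 → 2*t1 < t2 := by
    intro t1 t2 ht1 hlt hMeq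
    have ht2 : 1 ≤ t2 := by omega
    have h1 := hzeq t1 ht1
    have h2 := hzeq t2 ht2
    rw [hMeq] at h1
    have hg := pell_gap (M := (Mf t2 : ℤ)) (x1 := (p:ℤ)^2*(t1:ℤ)) (y1 := (rf t1 : ℤ))
      (x2 := (p:ℤ)^2*(t2:ℤ)) (y2 := (rf t2 : ℤ)) ?_ ?_ ?_ ?_ h1 h2 ?_
    · have hgz : ((p^2*(2*t1) : ℕ) : ℤ) < ((p^2*t2 : ℕ) : ℤ) := by push_cast; linarith
      exact Nat.lt_of_mul_lt_mul_left (Nat.cast_lt.mp hgz)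
    · exact_mod_cast hM2 t2 ht2
    · have : 2 ≤ p^2*t1 := by nlinarith
      exact_mod_cast this
    · exact_mod_cast (hpos t1 ht1).1
    · exact_mod_cast (hpos t2 ht2).1
    · have : p^2*t1 < p^2*t2 := by
        have hppos : 0 < p^2 := by positivity
        exact (Nat.mul_lt_mul_left hppos).mpr hlt
      exact_mod_cast this
  -- counting setup
  obtain ⟨a, hadef⟩ : ∃ a : ℕ, a = B.toNat + 4^(p+1)*p^4 + 2 := ⟨_, rfl⟩
  obtain ⟨j, hjdef⟩ : ∃ j : ℕ, j = 6*a := ⟨_, rfl⟩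
  obtain ⟨T, hTdef⟩ : ∃ T : ℕ, T = 2^(3*j) := ⟨_, rfl⟩
  obtain ⟨C, hCdef⟩ : ∃ C : ℕ, C = a * 2^(2*j) := ⟨_, rfl⟩
  have hT1 : 1 ≤ T := by rw [hTdef]; exact Nat.one_le_two_pow
  have hgood : ∃ t, 1 ≤ t ∧ t ≤ T ∧ B < (Mf t : ℤ) ∧ 4^(p+1)*p^4*t^2 < (Mf t)^p := by
    by_contra hcon
    push_neg at hcon
    have hbound : ∀ t, 1 ≤ t → t ≤ T → Mf t ≤ C := by
      intro t h1 h2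
      by_cases hc : B < (Mf t : ℤ)
      · have h3 := hcon t h1 h2 hc
        have h4 : (Mf t)^3 ≤ (Mf t)^p := Nat.pow_le_pow_right (hpos t h1).2 hp3
        have h5 : 4^(p+1)*p^4*t^2 ≤ 4^(p+1)*p^4*T^2 :=
          Nat.mul_le_mul_left _ (Nat.pow_le_pow_left h2 2)
        have hT2 : 4^(p+1)*p^4*T^2 ≤ a^3 * 2^(6*j) := by
          have ha3 : 4^(p+1)*p^4 ≤ a^3 := by
            have h6 : 4^(p+1)*p^4 ≤ a := by omega
            calc 4^(p+1)*p^4 ≤ a := h6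
            _ ≤ a^3 := Nat.le_self_pow (by norm_num) a
          have hTT : T^2 = 2^(6*j) := by
            rw [hTdef, ← pow_mul]
            ring_nf
          rw [hTT]
          exact Nat.mul_le_mul_right _ ha3
        have hC3 : a^3 * 2^(6*j) = C^3 := by
          rw [hCdef, mul_pow, ← pow_mul]
          ring_nf
        have h7 : (Mf t)^3 ≤ C^3 := by omega
        exact (Nat.pow_le_pow_iff_left (by norm_num)).mp h7
      · push_neg at hc
        have h8 : Mf t ≤ B.toNat := by
          have := Int.toNat_le_toNat hc
          simpa using this
        have h9 : B.toNat ≤ C := by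
          have : a ≤ C := by
            rw [hCdef]
            exact Nat.le_mul_of_pos_right _ (by positivity)
          omega
        omega
    have hkey : ∀ t1 t2 : ℕ, t1 ∈ Finset.Icc 1 T → t2 ∈ Finset.Icc 1 T → t1 < t2 →
        ¬(Mf t1 = Mf t2 ∧ Nat.log 2 t1 = Nat.log 2 t2) := by
      rintro t1 t2 h1 h2 hlt ⟨hMeq, hleq⟩
      rw [Finset.mem_Icc] at h1 h2
      have hg := hgap t1 t2 h1.1 hlt hMeq
      have hl1 : 2^(Nat.log 2 t1) ≤ t1 := Nat.pow_log_le_self 2 (by omega)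
      have hl2 : 2^(Nat.log 2 t1 + 1) ≤ t2 := by
        rw [pow_succ]
        omega
      have := (Nat.le_log_iff_pow_le one_lt_two (by omega : t2 ≠ 0)).mpr hl2
      omega
    have hinj : Set.InjOn (fun t => (Mf t, Nat.log 2 t)) (Finset.Icc 1 T) := by
      intro t1 h1 t2 h2 heq
      simp only [Prod.mk.injEq] at heq
      rcases lt_trichotomy t1 t2 with h | h | h
      · exact absurd ⟨heq.1, heq.2⟩ (hkey t1 t2 h1 h2 h)
      · exact h
      · exact absurd ⟨heq.1.symm, heq.2.symm⟩ (hkey t2 t1 h2 h1 h)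
    have hmaps : ∀ t ∈ Finset.Icc 1 T,
        (Mf t, Nat.log 2 t) ∈ (Finset.Icc 1 C) ×ˢ Finset.range (3*j+1) := by
      intro t ht
      rw [Finset.mem_Icc] at ht
      rw [Finset.mem_product, Finset.mem_Icc, Finset.mem_range]
      refine ⟨⟨(hpos t ht.1).2, hbound t ht.1 ht.2⟩, ?_⟩
      have := Nat.log_mono_right (b := 2) ht.2
      rw [hTdef, Nat.log_pow one_lt_two] at this
      omega
    have hcard := Finset.card_le_card_of_injOn (fun t => (Mf t, Nat.log 2 t)) hmaps hinj
    rw [Finset.card_product, Nat.card_Icc, Nat.card_Icc, Finset.card_range] at hcard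
    simp only [Nat.add_sub_cancel] at hcard
    -- hcard : T ≤ C * (3*j+1)
    have hlt2 : C * (3*j + 1) < T := by
      have h10 := count_aux (a := a) (by omega)
      have h11 : a * (3*j+1) < 2^j := by rw [hjdef]; exact h10
      calc C * (3*j+1) = (a*(3*j+1)) * 2^(2*j) := by rw [hCdef]; ring
      _ < 2^j * 2^(2*j) := by
        have h2j : 0 < 2^(2*j) := by positivity
        exact (Nat.mul_lt_mul_right h2j).mpr h11
      _ = T := by rw [hTdef, ← pow_add]; ring_nf
    exact Nat.lt_irrefl _ (lt_of_le_of_lt hcard hlt2)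
  obtain ⟨t, ht1, htT, hBlt, hbig⟩ := hgood
  have hr1 := (hpos t ht1).1
  have hMt2 := hM2 t ht1
  have hd2 : (2:ℤ) ≤ (Mf t : ℤ) := by exact_mod_cast hMt2
  have hM0R : (0:ℝ) ≤ (((Mf t : ℤ)):ℝ) := by positivity
  obtain ⟨sR, hsRdef⟩ : ∃ x : ℝ, x = Real.sqrt (((Mf t : ℤ)):ℝ) := ⟨_, rfl⟩
  have hs0 : 0 ≤ sR := by rw [hsRdef]; exact Real.sqrt_nonneg _
  have hs2 : sR^2 = (((Mf t : ℤ)):ℝ) := by rw [hsRdef]; exact Real.sq_sqrt hM0R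
  have hd2R : (2:ℝ) ≤ (((Mf t : ℤ)):ℝ) := by exact_mod_cast hd2
  have hsR1 : 1 ≤ sR := by nlinarith
  have hpR : (3:ℝ) ≤ (p:ℝ) := by exact_mod_cast hp3
  have htR : (1:ℝ) ≤ (t:ℝ) := by exact_mod_cast ht1
  have hrR : (1:ℝ) ≤ ((rf t : ℕ):ℝ) := by exact_mod_cast hr1
  have hzq0 := hzeq t ht1
  have hMem : ((Mf t : ℤ)) ∈ {M : ℤ | 2 ≤ M ∧ Squarefree M ∧
      ∃ t r : ℤ, 1 ≤ t ∧ 1 ≤ r ∧ (p : ℤ) ^ 4 * t ^ 2 - 1 = M * r ^ 2 ∧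
        (∃ gu gv : ℤ,
          ((p : ℝ) ^ 2 * (t : ℝ) + (r : ℝ) * Real.sqrt M) ^ 2 + 1 =
            (p : ℝ) ^ 2 * ((gu : ℝ) + (gv : ℝ) * Real.sqrt M)) ∧
        ¬∃ u v : ℤ, (4 : ℤ) ∣ u ^ 2 - M * v ^ 2 ∧
          (((u : ℝ) + (v : ℝ) * Real.sqrt M) / 2) ^ p =
            (p : ℝ) ^ 2 * (t : ℝ) + (r : ℝ) * Real.sqrt M} := by
    refine ⟨hd2, Int.squarefree_natCast.mpr (hsf t), (t:ℤ), ((rf t : ℕ):ℤ),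
      by exact_mod_cast ht1, by exact_mod_cast hr1, ?_, ?_, ?_⟩
    · push_cast
      push_cast at hzq0
      linear_combination hzq0
    · refine ⟨2*(p:ℤ)^2*(t:ℤ)^2, 2*(t:ℤ)*((rf t : ℕ):ℤ), ?_⟩
      rw [← hsRdef]
      have hMrR : (((Mf t : ℤ)):ℝ) * ((rf t : ℕ):ℝ)^2 = (p:ℝ)^4*(t:ℝ)^2 - 1 := by
        have : ((p:ℝ)^2*(t:ℝ))^2 - (((Mf t : ℤ)):ℝ)*((rf t : ℕ):ℝ)^2 = 1 := by
          exact_mod_cast hzq0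
        nlinarith [this]
      push_cast
      linear_combination ((rf t : ℕ):ℝ)^2 * hs2 + hMrR
    · rintro ⟨u, v, hdvd, heqr⟩
      rw [← hsRdef] at heqr
      push_cast at heqr
      have hsq := Int.squarefree_natCast.mpr (hsf t)
      have hns : ∀ n : ℤ, ((Mf t : ℤ)) ≠ n*n := by
        intro n hn
        have hu : IsUnit n := hsq n (by rw [← hn])
        rcases Int.isUnit_iff.mp hu with h | h <;> rw [h] at hn <;> omega
      have hsr' : sR * sR = (((Mf t : ℤ)):ℝ) := by nlinarith [hs2]
      have himg : (Zsqrtd.lift ⟨sR, hsr'⟩) ((⟨u, v⟩ : ℤ√(Mf t : ℤ))^p)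
          = (Zsqrtd.lift ⟨sR, hsr'⟩) (⟨2^p*((p:ℤ)^2*t), 2^p*((rf t : ℕ):ℤ)⟩ : ℤ√(Mf t : ℤ)) := by
        have h2 : ((u:ℝ)+(v:ℝ)*sR)^p = 2^p*((p:ℝ)^2*(t:ℝ) + ((rf t : ℕ):ℝ)*sR) := by
          rw [← heqr, div_pow]
          have h20 : ((2:ℝ))^p ≠ 0 := by positivity
          field_simp
        rw [map_pow]
        simp only [Zsqrtd.lift_apply_apply]
        push_cast
        linear_combination h2
      have hzq : (⟨u, v⟩ : ℤ√(Mf t : ℤ))^p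
          = (⟨2^p*((p:ℤ)^2*t), 2^p*((rf t : ℕ):ℤ)⟩ : ℤ√(Mf t : ℤ)) :=
        Zsqrtd.lift_injective _ hns himg
      have hnp : Zsqrtd.norm ((⟨u, v⟩ : ℤ√(Mf t : ℤ))^p)
          = (Zsqrtd.norm (⟨u, v⟩ : ℤ√(Mf t : ℤ)))^p :=
        map_pow (Zsqrtd.normMonoidHom) _ p
      have hnormeq : (u*u - (Mf t:ℤ)*v*v)^p
          = (2^p*((p:ℤ)^2*t))*(2^p*((p:ℤ)^2*t))
            - (Mf t:ℤ)*(2^p*((rf t : ℕ):ℤ))*(2^p*((rf t : ℕ):ℤ)) := by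
        have h := congrArg Zsqrtd.norm hzq
        rw [hnp] at h
        simpa [Zsqrtd.norm_def] using h
      obtain ⟨n, hn⟩ := hdvd
      have h4claim : (4:ℤ)^p * n^p = 4^p * 1 := by
        have h22 : (2:ℤ)^p * 2^p = 4^p := by rw [← mul_pow]; norm_num
        calc (4:ℤ)^p * n^p = (4*n)^p := by rw [mul_pow]
        _ = (u*u - (Mf t:ℤ)*v*v)^p := by
          rw [show u*u - (Mf t:ℤ)*v*v = 4*n by linear_combination hn]
        _ = (2^p*((p:ℤ)^2*t))*(2^p*((p:ℤ)^2*t))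
            - (Mf t:ℤ)*(2^p*((rf t : ℕ):ℤ))*(2^p*((rf t : ℕ):ℤ)) := hnormeq
        _ = (2^p*2^p) * (((p:ℤ)^2*t)^2 - (Mf t:ℤ)*((rf t : ℕ):ℤ)^2) := by ring
        _ = 4^p * 1 := by rw [h22, hzq0]
      have hnp1 : n^p = 1 := mul_left_cancel₀ (by positivity) h4claim
      have hn1 : n = 1 := by
        have hun : IsUnit n := IsUnit.of_pow_eq_one hnp1 (by omega)
        rcases Int.isUnit_iff.mp hun with h | h
        · exact h
        · rw [h, Odd.neg_one_pow hodd] at hnp1; omega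
      have hnu : u^2 - (Mf t:ℤ)*v^2 = 4 := by rw [hn1, mul_one] at hn; linarith
      obtain ⟨e, he⟩ : ∃ e : ℝ, e = ((u:ℝ) + (v:ℝ)*sR)/2 := ⟨_, rfl⟩
      obtain ⟨eb, heb⟩ : ∃ eb : ℝ, eb = ((u:ℝ) - (v:ℝ)*sR)/2 := ⟨_, rfl⟩
      rw [← he] at heqr
      have heps1 : 1 < (p:ℝ)^2*(t:ℝ) + ((rf t : ℕ):ℝ)*sR := by nlinarith
      have hepos : 0 < e := by
        by_contra h
        push_neg at h
        have := Odd.pow_nonpos hodd h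
        rw [heqr] at this
        linarith
      have he1 : 1 < e := by
        by_contra h
        push_neg at h
        have := pow_le_one₀ (n := p) hepos.le h
        rw [heqr] at this
        linarith
      have hnuR : (u:ℝ)^2 - (((Mf t : ℤ)):ℝ)*(v:ℝ)^2 = 4 := by exact_mod_cast hnu
      have hmul1 : e * eb = 1 := by
        rw [he, heb]
        linear_combination (1/4) * hnuR - ((v:ℝ)^2/4) * hs2
      have heb0 : 0 < eb := by
        refine aux_pos hepos ?_
        rw [mul_comm eb e, hmul1]
        norm_num
      have heb1 : eb < 1 := by nlinarith [mul_pos (sub_pos.mpr he1) heb0]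
      have hsum : e + eb = (u:ℝ) := by rw [he, heb]; ring
      have hdiff : e - eb = (v:ℝ)*sR := by rw [he, heb]; ring
      have hu2 : (2:ℝ) ≤ (u:ℝ) := by
        have h1 : (1:ℝ) < (u:ℝ) := by linarith
        have h2 : (1:ℤ) < u := by exact_mod_cast h1
        exact_mod_cast h2
      have hv1 : (1:ℝ) ≤ (v:ℝ) := by
        have h0 : 0 < (v:ℝ)*sR := by linarith
        have h1 : 0 < (v:ℝ) := aux_pos (by linarith : (0:ℝ) < sR) h0
        have h2 : (0:ℤ) < v := by exact_mod_cast h1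
        have h3 : (1:ℤ) ≤ v := h2
        exact_mod_cast h3
      have hege : sR/2 ≤ e := by
        rw [he]
        nlinarith [mul_nonneg (sub_nonneg.mpr hv1) hs0]
      have hrs : ((rf t : ℕ):ℝ)*sR < (p:ℝ)^2*(t:ℝ) := by
        have hzqR : ((p:ℝ)^2*(t:ℝ))^2 - (((Mf t : ℤ)):ℝ)*((rf t : ℕ):ℝ)^2 = 1 := by
          exact_mod_cast hzq0
        have h1 : (((rf t : ℕ):ℝ)*sR)^2 = ((p:ℝ)^2*(t:ℝ))^2 - 1 := by
          linear_combination ((rf t : ℕ):ℝ)^2 * hs2 - hzqR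
        by_contra hcc
        push_neg at hcc
        have h2 := pow_le_pow_left₀ (by positivity) hcc 2
        nlinarith
      have hfinR : (sR/2)^p ≤ (p:ℝ)^2*(t:ℝ) + ((rf t : ℕ):ℝ)*sR := by
        rw [← heqr]
        exact pow_le_pow_left₀ (by positivity) hege p
      have hA2 : (((Mf t : ℤ):ℝ)/4)^p < 4*(p:ℝ)^4*(t:ℝ)^2 := by
        have h1 : (sR/2)^p < 2*((p:ℝ)^2*(t:ℝ)) := by linarith
        have h0 : (0:ℝ) ≤ (sR/2)^p := by positivity
        have h2 : ((sR/2)^p)^2 < (2*((p:ℝ)^2*(t:ℝ)))^2 := by nlinarith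
        have h3 : ((sR/2)^p)^2 = ((sR/2)^2)^p := by
          rw [← pow_mul, ← pow_mul, Nat.mul_comm]
        have h4 : (sR/2)^2 = ((Mf t : ℤ):ℝ)/4 := by
          rw [div_pow, hs2]
          norm_num
        rw [h3, h4] at h2
        nlinarith [h2]
      have hcontra : (((Mf t : ℤ)):ℝ)^p < 4^(p+1)*(p:ℝ)^4*(t:ℝ)^2 := by
        rw [div_pow] at hA2
        have h4 : (0:ℝ) < (4:ℝ)^p := by positivity
        rw [div_lt_iff₀ h4] at hA2
        rw [pow_succ]
        nlinarith [hA2]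
      have hbigR : (4:ℝ)^(p+1)*(p:ℝ)^4*(t:ℝ)^2 < (((Mf t : ℤ)):ℝ)^p := by
        have : ((4^(p+1)*p^4*t^2 : ℕ):ℝ) < (((Mf t)^p : ℕ):ℝ) := by exact_mod_cast hbig
        push_cast at this
        convert this using 2 <;> push_cast <;> ring
      linarith
  exact absurd (hB hMem) (not_le.mpr hBlt)
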